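/- The action of the subgroup Γ̄(2) = ⟨U², L²⟩ ≤ SL₂(ℤ) on the set of primitive vectors of ℤ² has exactly 5 orbits, represented by (0,1), (0,-1), (1,0), (-1,0), and (1,1). Explicitly, the orbits are: {(p,q) primitive : p even, q ≡ 1 mod 4}, {(p,q) primitive : p even, q ≡ -1 mod 4}, {(p,q) primitive : q even, p ≡ 1 mod 4}, {(p,q) primitive : q even, p ≡ -1 mod 4}, and {(p,q) primitive : p, q both odd}. -/

import Mathlib

open Matrix

/-- `U = [[1,1],[0,1]]` in `SL₂(ℤ)`. -/
def Umat : Matrix.SpecialLinearGroup (Fin 2) ℤ :=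
  ⟨!![1, 1; 0, 1], by norm_num [Matrix.det_fin_two_of]⟩

/-- `L = [[1,0],[1,1]]` in `SL₂(ℤ)`. -/
def Lmat : Matrix.SpecialLinearGroup (Fin 2) ℤ :=
  ⟨!![1, 0; 1, 1], by norm_num [Matrix.det_fin_two_of]⟩

/-- `Γ̄(2) = ⟨U², L²⟩` as a subgroup of `SL₂(ℤ)`. -/
def GammaBar2 : Subgroup (Matrix.SpecialLinearGroup (Fin 2) ℤ) :=
  Subgroup.closure {Umat ^ 2, Lmat ^ 2}

/-- `v` and `w` lie in the same `Γ̄(2)`-orbit. -/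
def sameOrbit (v w : Fin 2 → ℤ) : Prop :=
  ∃ A ∈ GammaBar2, A.1.mulVec v = w

/- ### Auxiliary machinery -/

lemma mulVec_two (a b c d p q : ℤ) :
    (!![a,b;c,d]).mulVec ![p,q] = ![a*p+b*q, c*p+d*q] := by
  funext i; fin_cases i <;> simp [Matrix.mulVec, dotProduct, Fin.sum_univ_two]

lemma Usq_coe : (Umat^2).1 = !![1,2;0,1] := by
  rw [pow_two, Matrix.SpecialLinearGroup.coe_mul]; simp [Umat, Matrix.mul_fin_two]

lemma Lsq_coe : (Lmat^2).1 = !![1,0;2,1] := by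
  rw [pow_two, Matrix.SpecialLinearGroup.coe_mul]; simp [Lmat, Matrix.mul_fin_two]

lemma Usq_mem : Umat^2 ∈ GammaBar2 := Subgroup.subset_closure (by simp)
lemma Lsq_mem : Lmat^2 ∈ GammaBar2 := Subgroup.subset_closure (by simp)

lemma sameOrbit_refl (v : Fin 2 → ℤ) : sameOrbit v v :=
  ⟨1, one_mem _, by simp⟩

lemma sameOrbit_trans {u v w : Fin 2 → ℤ} (h1 : sameOrbit u v) (h2 : sameOrbit v w) :
    sameOrbit u w := by
  obtain ⟨A, hA, hAe⟩ := h1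
  obtain ⟨B, hB, hBe⟩ := h2
  exact ⟨B*A, mul_mem hB hA, by
    rw [Matrix.SpecialLinearGroup.coe_mul, ← Matrix.mulVec_mulVec, hAe, hBe]⟩

lemma sameOrbit_symm {v w : Fin 2 → ℤ} (h : sameOrbit v w) : sameOrbit w v := by
  obtain ⟨A, hA, hAe⟩ := h
  refine ⟨A⁻¹, inv_mem hA, ?_⟩
  rw [← hAe, Matrix.mulVec_mulVec, ← Matrix.SpecialLinearGroup.coe_mul, inv_mul_cancel]
  simp

lemma stepU (p q : ℤ) : sameOrbit ![p,q] ![p+2*q, q] :=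
  ⟨Umat^2, Usq_mem, by rw [Usq_coe, mulVec_two]; norm_num⟩

lemma stepL (p q : ℤ) : sameOrbit ![p,q] ![p, q+2*p] :=
  ⟨Lmat^2, Lsq_mem, by rw [Lsq_coe, mulVec_two]; ring_nf⟩

lemma stepU' (p q : ℤ) : sameOrbit ![p,q] ![p-2*q, q] := by
  have := sameOrbit_symm (stepU (p-2*q) q)
  have e : p - 2*q + 2*q = p := by ring
  rwa [e] at this

lemma stepL' (p q : ℤ) : sameOrbit ![p,q] ![p, q-2*p] := by
  have := sameOrbit_symm (stepL p (q-2*p))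
  have e : q - 2*p + 2*p = q := by ring
  rwa [e] at this

/-- The orbit invariant: parities, and the residue mod 4 of the odd coordinate
when the other is even. -/
def phi (v : Fin 2 → ℤ) : ℤ × ℤ × ℤ :=
  (v 0 % 2, v 1 % 2,
    if v 0 % 2 = 0 then v 1 % 4 else if v 1 % 2 = 0 then v 0 % 4 else 0)

lemma phi_gen_U (v : Fin 2 → ℤ) :
    phi ((!![1,2;0,1] : Matrix (Fin 2) (Fin 2) ℤ).mulVec v) = phi v := by
  have h0 : (!![1,2;0,1] : Matrix (Fin 2) (Fin 2) ℤ).mulVec v 0 = v 0 + 2 * v 1 := by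
    simp [Matrix.mulVec, dotProduct, Fin.sum_univ_two]; try ring
  have h1 : (!![1,2;0,1] : Matrix (Fin 2) (Fin 2) ℤ).mulVec v 1 = v 1 := by
    simp [Matrix.mulVec, dotProduct, Fin.sum_univ_two]
  simp only [phi, h0, h1, Prod.mk.injEq]
  refine ⟨by omega, by trivial, ?_⟩
  split_ifs <;> omega

lemma phi_gen_L (v : Fin 2 → ℤ) :
    phi ((!![1,0;2,1] : Matrix (Fin 2) (Fin 2) ℤ).mulVec v) = phi v := by
  have h0 : (!![1,0;2,1] : Matrix (Fin 2) (Fin 2) ℤ).mulVec v 0 = v 0 := by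
    simp [Matrix.mulVec, dotProduct, Fin.sum_univ_two]
  have h1 : (!![1,0;2,1] : Matrix (Fin 2) (Fin 2) ℤ).mulVec v 1 = v 1 + 2 * v 0 := by
    simp [Matrix.mulVec, dotProduct, Fin.sum_univ_two]; try ring
  simp only [phi, h0, h1, Prod.mk.injEq]
  refine ⟨by trivial, by omega, ?_⟩
  split_ifs <;> omega

lemma phi_invariant {A : Matrix.SpecialLinearGroup (Fin 2) ℤ} (hA : A ∈ GammaBar2)
    (v : Fin 2 → ℤ) : phi (A.1.mulVec v) = phi v := by
  induction hA using Subgroup.closure_induction generalizing v with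
  | mem x hx =>
      rcases hx with h | h
      · subst h; rw [Usq_coe]; exact phi_gen_U v
      · subst h; rw [Lsq_coe]; exact phi_gen_L v
  | one => simp
  | mul x y hx hy ihx ihy =>
      rw [Matrix.SpecialLinearGroup.coe_mul, ← Matrix.mulVec_mulVec, ihx, ihy]
  | inv x hx ih =>
      have := ih ((x⁻¹).1.mulVec v)
      rw [Matrix.mulVec_mulVec, ← Matrix.SpecialLinearGroup.coe_mul, mul_inv_cancel,
        Matrix.SpecialLinearGroup.coe_one, Matrix.one_mulVec] at this
      exact this.symm

lemma phi_sameOrbit {v w : Fin 2 → ℤ} (h : sameOrbit v w) : phi v = phi w := by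
  obtain ⟨A, hA, hAe⟩ := h
  rw [← hAe, phi_invariant hA]

lemma phi_pq (p q : ℤ) : phi ![p,q] =
    (p % 2, q % 2, if p % 2 = 0 then q % 4 else if q % 2 = 0 then p % 4 else 0) := by
  simp only [phi, Matrix.cons_val_zero, Matrix.cons_val_one, Matrix.head_cons]
  rfl

lemma phi_contra {p q a b : ℤ} (hh : sameOrbit ![p,q] ![a,b]) :
    p % 2 = a % 2 ∧ q % 2 = b % 2 ∧
      (if p % 2 = 0 then q % 4 else if q % 2 = 0 then p % 4 else 0)
        = (if a % 2 = 0 then b % 4 else if b % 2 = 0 then a % 4 else 0) := by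
  have := phi_sameOrbit hh
  rw [phi_pq, phi_pq] at this
  simpa [Prod.ext_iff] using this

/-- Every primitive vector reaches one of the 5 representatives. -/
lemma reach : ∀ n : ℕ, ∀ p q : ℤ, p.natAbs + q.natAbs = n → IsCoprime p q →
    sameOrbit ![p,q] ![0,1] ∨ sameOrbit ![p,q] ![0,-1] ∨ sameOrbit ![p,q] ![1,0] ∨
      sameOrbit ![p,q] ![-1,0] ∨ sameOrbit ![p,q] ![1,1] := by
  intro n
  induction n using Nat.strong_induction_on with
  | _ n IH =>
  intro p q hn hco
  by_cases hq : q = 0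
  · subst hq
    rcases Int.isUnit_iff.mp (isCoprime_zero_right.mp hco) with h | h <;> subst h
    · exact Or.inr (Or.inr (Or.inl (sameOrbit_refl _)))
    · exact Or.inr (Or.inr (Or.inr (Or.inl (sameOrbit_refl _))))
  by_cases hp : p = 0
  · subst hp
    rcases Int.isUnit_iff.mp (isCoprime_zero_left.mp hco) with h | h <;> subst h
    · exact Or.inl (sameOrbit_refl _)
    · exact Or.inr (Or.inl (sameOrbit_refl _))
  rcases lt_trichotomy p.natAbs q.natAbs with h | h | h
  · -- reduce q
    have hred : (q-2*p).natAbs < q.natAbs ∨ (q+2*p).natAbs < q.natAbs := by omega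
    rcases hred with h1 | h1
    · have hco' : IsCoprime p (q - 2*p) := by
        have e : q - 2*p = q + p * (-2) := by ring
        rw [e]; exact hco.add_mul_left_right (-2)
      have hr := IH (p.natAbs + (q-2*p).natAbs) (by omega) p (q-2*p) rfl hco'
      have st := stepL' p q
      rcases hr with hh|hh|hh|hh|hh
      · exact Or.inl (sameOrbit_trans st hh)
      · exact Or.inr (Or.inl (sameOrbit_trans st hh))
      · exact Or.inr (Or.inr (Or.inl (sameOrbit_trans st hh)))
      · exact Or.inr (Or.inr (Or.inr (Or.inl (sameOrbit_trans st hh))))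
      · exact Or.inr (Or.inr (Or.inr (Or.inr (sameOrbit_trans st hh))))
    · have hco' : IsCoprime p (q + 2*p) := by
        have e : q + 2*p = q + p * 2 := by ring
        rw [e]; exact hco.add_mul_left_right 2
      have hr := IH (p.natAbs + (q+2*p).natAbs) (by omega) p (q+2*p) rfl hco'
      have st := stepL p q
      rcases hr with hh|hh|hh|hh|hh
      · exact Or.inl (sameOrbit_trans st hh)
      · exact Or.inr (Or.inl (sameOrbit_trans st hh))
      · exact Or.inr (Or.inr (Or.inl (sameOrbit_trans st hh)))
      · exact Or.inr (Or.inr (Or.inr (Or.inl (sameOrbit_trans st hh))))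
      · exact Or.inr (Or.inr (Or.inr (Or.inr (sameOrbit_trans st hh))))
  · -- |p| = |q|: both are units
    have hg : Int.gcd p q = 1 := Int.isCoprime_iff_gcd_eq_one.mp hco
    have h2 : q.natAbs = 1 := by
      unfold Int.gcd at hg; rw [h] at hg; simpa using hg
    have h1 : p.natAbs = 1 := by omega
    have hp' : p = 1 ∨ p = -1 := by omega
    have hq' : q = 1 ∨ q = -1 := by omega
    rcases hp' with rfl | rfl <;> rcases hq' with rfl | rfl
    · exact Or.inr (Or.inr (Or.inr (Or.inr (sameOrbit_refl _))))
    · refine Or.inr (Or.inr (Or.inr (Or.inr ?_)))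
      have := stepL 1 (-1); norm_num at this; exact this
    · refine Or.inr (Or.inr (Or.inr (Or.inr ?_)))
      have := stepU (-1) 1; norm_num at this; exact this
    · refine Or.inr (Or.inr (Or.inr (Or.inr ?_)))
      have s1 := stepU' (-1) (-1); norm_num at s1
      have s2 := stepL 1 (-1); norm_num at s2
      exact sameOrbit_trans s1 s2
  · -- reduce p
    have hred : (p-2*q).natAbs < p.natAbs ∨ (p+2*q).natAbs < p.natAbs := by omega
    rcases hred with h1 | h1
    · have hco' : IsCoprime (p - 2*q) q := by
        have e : p - 2*q = p + -2 * q := by ring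
        rw [e]; exact hco.add_mul_right_left (-2)
      have hr := IH ((p-2*q).natAbs + q.natAbs) (by omega) (p-2*q) q rfl hco'
      have st := stepU' p q
      rcases hr with hh|hh|hh|hh|hh
      · exact Or.inl (sameOrbit_trans st hh)
      · exact Or.inr (Or.inl (sameOrbit_trans st hh))
      · exact Or.inr (Or.inr (Or.inl (sameOrbit_trans st hh)))
      · exact Or.inr (Or.inr (Or.inr (Or.inl (sameOrbit_trans st hh))))
      · exact Or.inr (Or.inr (Or.inr (Or.inr (sameOrbit_trans st hh))))
    · have hco' : IsCoprime (p + 2*q) q := by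
        have e : p + 2*q = p + 2 * q := by ring
        rw [e]; exact hco.add_mul_right_left 2
      have hr := IH ((p+2*q).natAbs + q.natAbs) (by omega) (p+2*q) q rfl hco'
      have st := stepU p q
      rcases hr with hh|hh|hh|hh|hh
      · exact Or.inl (sameOrbit_trans st hh)
      · exact Or.inr (Or.inl (sameOrbit_trans st hh))
      · exact Or.inr (Or.inr (Or.inl (sameOrbit_trans st hh)))
      · exact Or.inr (Or.inr (Or.inr (Or.inl (sameOrbit_trans st hh))))
      · exact Or.inr (Or.inr (Or.inr (Or.inr (sameOrbit_trans st hh))))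

/-- the `Γ̄(2)`-action on primitive vectors has exactly 5 orbits,
represented by `(0,1)`, `(0,-1)`, `(1,0)`, `(-1,0)`, `(1,1)`, which are explicitly
described by parity/mod 4 conditions. -/
theorem stmt14 (p q : ℤ) (hprim : IsCoprime p q) :
    (sameOrbit ![0, 1] ![p, q] ↔ (Even p ∧ q % 4 = 1)) ∧
    (sameOrbit ![0, -1] ![p, q] ↔ (Even p ∧ q % 4 = 3)) ∧
    (sameOrbit ![1, 0] ![p, q] ↔ (Even q ∧ p % 4 = 1)) ∧
    (sameOrbit ![-1, 0] ![p, q] ↔ (Even q ∧ p % 4 = 3)) ∧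
    (sameOrbit ![1, 1] ![p, q] ↔ (Odd p ∧ Odd q)) := by
  have hr := reach (p.natAbs + q.natAbs) p q rfl hprim
  rw [Int.even_iff, Int.even_iff, Int.odd_iff, Int.odd_iff]
  refine ⟨⟨fun h => ?_, fun h => ?_⟩, ⟨fun h => ?_, fun h => ?_⟩, ⟨fun h => ?_, fun h => ?_⟩,
    ⟨fun h => ?_, fun h => ?_⟩, ⟨fun h => ?_, fun h => ?_⟩⟩
  · obtain ⟨c1, c2, c3⟩ := phi_contra (sameOrbit_symm h)
    split_ifs at c3 <;> exact ⟨by omega, by omega⟩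
  · rcases hr with hh|hh|hh|hh|hh
    · exact sameOrbit_symm hh
    all_goals (exfalso; obtain ⟨c1, c2, c3⟩ := phi_contra hh; split_ifs at c3 <;> omega)
  · obtain ⟨c1, c2, c3⟩ := phi_contra (sameOrbit_symm h)
    split_ifs at c3 <;> exact ⟨by omega, by omega⟩
  · rcases hr with hh|hh|hh|hh|hh
    · exfalso; obtain ⟨c1, c2, c3⟩ := phi_contra hh; split_ifs at c3 <;> omega
    · exact sameOrbit_symm hh
    all_goals (exfalso; obtain ⟨c1, c2, c3⟩ := phi_contra hh; split_ifs at c3 <;> omega)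
  · obtain ⟨c1, c2, c3⟩ := phi_contra (sameOrbit_symm h)
    split_ifs at c3 <;> exact ⟨by omega, by omega⟩
  · rcases hr with hh|hh|hh|hh|hh
    · exfalso; obtain ⟨c1, c2, c3⟩ := phi_contra hh; split_ifs at c3 <;> omega
    · exfalso; obtain ⟨c1, c2, c3⟩ := phi_contra hh; split_ifs at c3 <;> omega
    · exact sameOrbit_symm hh
    all_goals (exfalso; obtain ⟨c1, c2, c3⟩ := phi_contra hh; split_ifs at c3 <;> omega)
  · obtain ⟨c1, c2, c3⟩ := phi_contra (sameOrbit_symm h)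
    split_ifs at c3 <;> exact ⟨by omega, by omega⟩
  · rcases hr with hh|hh|hh|hh|hh
    · exfalso; obtain ⟨c1, c2, c3⟩ := phi_contra hh; split_ifs at c3 <;> omega
    · exfalso; obtain ⟨c1, c2, c3⟩ := phi_contra hh; split_ifs at c3 <;> omega
    · exfalso; obtain ⟨c1, c2, c3⟩ := phi_contra hh; split_ifs at c3 <;> omega
    · exact sameOrbit_symm hh
    · exfalso; obtain ⟨c1, c2, c3⟩ := phi_contra hh; split_ifs at c3 <;> omega
  · obtain ⟨c1, c2, c3⟩ := phi_contra (sameOrbit_symm h)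
    split_ifs at c3 <;> exact ⟨by omega, by omega⟩
  · rcases hr with hh|hh|hh|hh|hh
    · exfalso; obtain ⟨c1, c2, c3⟩ := phi_contra hh; split_ifs at c3 <;> omega
    · exfalso; obtain ⟨c1, c2, c3⟩ := phi_contra hh; split_ifs at c3 <;> omega
    · exfalso; obtain ⟨c1, c2, c3⟩ := phi_contra hh; split_ifs at c3 <;> omega
    · exfalso; obtain ⟨c1, c2, c3⟩ := phi_contra hh; split_ifs at c3 <;> omega
    · exact sameOrbit_symm hh
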